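/- arXiv:1303.2495 — 3 statements merged into one kernel-verified Lean document; each statement's English description precedes it below -/
import Mathlib

section
/- Let ρ : ℝ^d → ℝ be measurable with |ρ(t)| ≤ 1 for all t and ∫_{ℝ^d} |ρ(t)| dt < ∞. Then for every real u the series Σ_{n=1}^∞ (φ(u)² H_{n−1}(u)² / n!) ∫_{ℝ^d} |ρ(t)|^n dt converges (is finite). -/
open MeasureTheory

/-- The standard Gaussian density `φ(u) = (2π)^{-1/2} e^{-u²/2}`. -/
noncomputable def gaussDensity (u : ℝ) : ℝ := Real.exp (-u ^ 2 / 2) / Real.sqrt (2 * Real.pi)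

/-- Evaluation of the probabilists' Hermite polynomial `H_n` at a real point. -/
noncomputable def hermiteEval (n : ℕ) (x : ℝ) : ℝ := Polynomial.aeval x (Polynomial.hermite n)

open MeasureTheory Real Set Filter Complex
open scoped ENNReal FourierTransform

namespace SigmaAux


/-- `gb = 2π²`. -/
noncomputable def gb : ℝ := 2 * Real.pi ^ 2

lemma gb_pos : 0 < gb := by
  have := Real.pi_pos
  unfold gb; positivity

/-- Absolute moments of the gaussian `exp(-2π² x²)`. -/
noncomputable def K (n : ℕ) : ℝ := ∫ x : ℝ, |x| ^ n * Real.exp (-gb * x ^ 2)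

lemma K_integrand_integrable (n : ℕ) :
    Integrable fun x : ℝ => |x| ^ n * Real.exp (-gb * x ^ 2) := by
  have h := integrable_rpow_mul_exp_neg_mul_sq gb_pos
    (s := (n : ℝ)) (lt_of_lt_of_le (by norm_num) (Nat.cast_nonneg n))
  have h2 : Integrable fun x : ℝ => x ^ n * Real.exp (-gb * x ^ 2) := by
    refine h.congr (Filter.Eventually.of_forall fun x => ?_)
    simp [Real.rpow_natCast]
  refine h2.abs.congr (Filter.Eventually.of_forall fun x => ?_)
  simp [abs_mul, abs_pow, abs_of_pos (Real.exp_pos _)]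

lemma K_pos (n : ℕ) : 0 < K n := by
  rw [K, integral_pos_iff_support_of_nonneg
    (fun x => by positivity) (K_integrand_integrable n)]
  have hsub : Set.Ioi (0:ℝ) ⊆ Function.support fun x : ℝ => |x| ^ n * Real.exp (-gb * x ^ 2) := by
    intro x hx
    have hx0 : (0:ℝ) < x := hx
    have : (0:ℝ) < |x| ^ n * Real.exp (-gb * x ^ 2) := by positivity
    exact ne_of_gt this
  calc (0:ℝ≥0∞) < volume (Set.Ioi (0:ℝ)) := by simp [Real.volume_Ioi]
  _ ≤ _ := measure_mono hsub

/-- Half-line moments. -/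
noncomputable def J (n : ℕ) : ℝ := ∫ x in Set.Ioi (0:ℝ), x ^ n * Real.exp (-gb * x ^ 2)

lemma J_integrableOn (n : ℕ) :
    IntegrableOn (fun x : ℝ => x ^ n * Real.exp (-gb * x ^ 2)) (Set.Ioi 0) := by
  refine ((K_integrand_integrable n).integrableOn).congr_fun (fun x hx => ?_) measurableSet_Ioi
  beta_reduce
  rw [abs_of_pos hx]

lemma K_eq_two_J (n : ℕ) : K n = 2 * J n := by
  rw [K, J, ← integral_comp_abs (f := fun y => y ^ n * Real.exp (-gb * y ^ 2))]
  congr 1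
  funext x
  rw [_root_.sq_abs]

lemma J_rec (n : ℕ) : J (n + 2) = ((n : ℝ) + 1) / (2 * gb) * J n := by
  have htend : Tendsto (fun x : ℝ => x ^ (n+1) * Real.exp (-gb * x ^ 2)) atTop (nhds 0) := by
    have hhalf : Tendsto (fun x : ℝ => (1/2 : ℝ) * x) atTop atTop :=
      Tendsto.const_mul_atTop (by norm_num) tendsto_id
    have hexp : Tendsto (fun x : ℝ => Real.exp (-(1/2) * x)) atTop (nhds 0) := by
      have := Real.tendsto_exp_atBot.comp (tendsto_neg_atBot_iff.mpr hhalf)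
      refine this.congr fun x => ?_
      simp [Function.comp, neg_mul]
    have h := (rpow_mul_exp_neg_mul_sq_isLittleO_exp_neg gb_pos ((n:ℝ)+1)).isBigO.trans_tendsto
      hexp
    refine h.congr' (Filter.Eventually.of_forall fun x => ?_)
    rw [show ((n:ℝ)+1) = ((n+1 : ℕ) : ℝ) by push_cast; ring, Real.rpow_natCast]
  have hderiv : ∀ x ∈ Set.Ici (0:ℝ),
      HasDerivAt (fun x : ℝ => x ^ (n+1) * Real.exp (-gb * x ^ 2))
        (((n:ℝ)+1) * (x ^ n * Real.exp (-gb * x ^ 2))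
          - 2 * gb * (x ^ (n+2) * Real.exp (-gb * x ^ 2))) x := by
    intro x _
    have h1 : HasDerivAt (fun x : ℝ => x ^ (n+1)) (((n:ℝ)+1) * x ^ n) x := by
      simpa using hasDerivAt_pow (n+1) x
    have h2 : HasDerivAt (fun x : ℝ => Real.exp (-gb * x ^ 2))
        (Real.exp (-gb * x ^ 2) * (-gb * (2 * x))) x := by
      have := ((hasDerivAt_pow 2 x).const_mul (-gb)).exp
      simpa using this
    have := h1.mul h2
    refine this.congr_deriv ?_
    ring
  have hint : IntegrableOn (fun x : ℝ =>
      ((n:ℝ)+1) * (x ^ n * Real.exp (-gb * x ^ 2))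
        - 2 * gb * (x ^ (n+2) * Real.exp (-gb * x ^ 2))) (Set.Ioi 0) :=
    ((J_integrableOn n).const_mul _).sub ((J_integrableOn (n+2)).const_mul _)
  have hFTC := integral_Ioi_of_hasDerivAt_of_tendsto' hderiv hint htend
  have h0 : (0:ℝ) ^ (n+1) * Real.exp (-gb * (0:ℝ) ^ 2) = 0 := by simp
  rw [h0, sub_zero] at hFTC
  have hsplit : ∫ x in Set.Ioi (0:ℝ),
      (((n:ℝ)+1) * (x ^ n * Real.exp (-gb * x ^ 2))
        - 2 * gb * (x ^ (n+2) * Real.exp (-gb * x ^ 2)))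
      = ((n:ℝ)+1) * J n - 2 * gb * J (n+2) := by
    rw [integral_sub ((J_integrableOn n).const_mul _) ((J_integrableOn (n+2)).const_mul _),
      MeasureTheory.integral_const_mul, MeasureTheory.integral_const_mul]
    rfl
  rw [hsplit] at hFTC
  have hgb := gb_pos
  field_simp
  linarith

lemma K_rec (n : ℕ) : K (n + 2) = ((n : ℝ) + 1) / (2 * gb) * K n := by
  rw [K_eq_two_J, K_eq_two_J, J_rec]
  ring

lemma K_amgm (n : ℕ) : K (n + 1) ≤ Real.sqrt (K n * K (n + 2)) := by
  set s := Real.sqrt (K n) with hs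
  set v := Real.sqrt (K (n + 2)) with hv
  have hspos : 0 < s := Real.sqrt_pos.mpr (K_pos n)
  have hvpos : 0 < v := Real.sqrt_pos.mpr (K_pos (n + 2))
  set t := v / s with ht
  have htpos : 0 < t := div_pos hvpos hspos
  have hpt : ∀ x : ℝ, |x| ^ (n+1) * Real.exp (-gb * x ^ 2)
      ≤ (t * (|x| ^ n * Real.exp (-gb * x ^ 2))
        + (|x| ^ (n+2) * Real.exp (-gb * x ^ 2)) / t) / 2 := by
    intro x
    have e1 : |x| ^ (n+1) = |x| ^ n * |x| := pow_succ _ _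
    have e2 : |x| ^ (n+2) = |x| ^ n * |x| ^ 2 := pow_add _ n 2
    have hnn : 0 ≤ |x| ^ n * (t - |x|) ^ 2 * Real.exp (-gb * x ^ 2) := by positivity
    rw [e1, e2, le_div_iff₀ (by norm_num : (0:ℝ) < 2)]
    have key : (t * (|x| ^ n * Real.exp (-gb * x ^ 2))
        + (|x| ^ n * |x| ^ 2 * Real.exp (-gb * x ^ 2)) / t)
        - |x| ^ n * |x| * Real.exp (-gb * x ^ 2) * 2
        = (|x| ^ n * (t - |x|) ^ 2 * Real.exp (-gb * x ^ 2)) / t := by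
      field_simp
      ring
    have hdiv : 0 ≤ (|x| ^ n * (t - |x|) ^ 2 * Real.exp (-gb * x ^ 2)) / t :=
      div_nonneg hnn htpos.le
    linarith
  have hgint : Integrable (fun x : ℝ => (t * (|x| ^ n * Real.exp (-gb * x ^ 2))
      + (|x| ^ (n+2) * Real.exp (-gb * x ^ 2)) / t) / 2) := by
    exact (((K_integrand_integrable n).const_mul t).add
      ((K_integrand_integrable (n+2)).div_const t)).div_const 2
  have hK1 := integral_mono (K_integrand_integrable (n+1)) hgint hpt
  have hval : ∫ x : ℝ, (t * (|x| ^ n * Real.exp (-gb * x ^ 2))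
      + (|x| ^ (n+2) * Real.exp (-gb * x ^ 2)) / t) / 2
      = (t * K n + K (n+2) / t) / 2 := by
    rw [integral_div, integral_add ((K_integrand_integrable n).const_mul t)
      ((K_integrand_integrable (n+2)).div_const t), MeasureTheory.integral_const_mul,
      integral_div]
    rfl
  have hKn : K n = s ^ 2 := (Real.sq_sqrt (K_pos n).le).symm
  have hKn2 : K (n+2) = v ^ 2 := (Real.sq_sqrt (K_pos (n+2)).le).symm
  have hsqrt : Real.sqrt (K n * K (n + 2)) = s * v := by
    rw [Real.sqrt_mul (K_pos n).le, ← hs, ← hv]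
  calc K (n+1) ≤ (t * K n + K (n+2) / t) / 2 := by rw [hval] at hK1; exact hK1
  _ = s * v := by rw [hKn, hKn2, ht]; field_simp; ring
  _ = Real.sqrt (K n * K (n + 2)) := hsqrt.symm

lemma K_ratio (n : ℕ) : Real.sqrt (((n:ℝ) + 1) / (2 * gb)) * K (n + 1) ≤ K (n + 2) := by
  have h := K_amgm n
  have hn1 : (0:ℝ) < (n:ℝ) + 1 := by positivity
  have hgb := gb_pos
  have hKn : K n = (2 * gb / ((n:ℝ) + 1)) * K (n + 2) := by
    rw [K_rec n]; field_simp
  have h2 : K (n + 1) ≤ Real.sqrt (2 * gb / ((n:ℝ) + 1)) * K (n + 2) := by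
    calc K (n+1) ≤ Real.sqrt (K n * K (n + 2)) := h
    _ = Real.sqrt ((2 * gb / ((n:ℝ) + 1)) * K (n+2) ^ 2) := by rw [hKn]; congr 1; ring
    _ = Real.sqrt (2 * gb / ((n:ℝ) + 1)) * K (n + 2) := by
        rw [Real.sqrt_mul (by positivity), Real.sqrt_sq (K_pos (n+2)).le]
  calc Real.sqrt (((n:ℝ) + 1) / (2 * gb)) * K (n + 1)
      ≤ Real.sqrt (((n:ℝ) + 1) / (2 * gb)) * (Real.sqrt (2 * gb / ((n:ℝ) + 1)) * K (n + 2)) := by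
        apply mul_le_mul_of_nonneg_left h2 (Real.sqrt_nonneg _)
  _ = Real.sqrt ((((n:ℝ) + 1) / (2 * gb)) * (2 * gb / ((n:ℝ) + 1))) * K (n + 2) := by
        rw [← mul_assoc, ← Real.sqrt_mul (by positivity)]
  _ = K (n + 2) := by
        rw [show (((n:ℝ) + 1) / (2 * gb)) * (2 * gb / ((n:ℝ) + 1)) = 1 by field_simp]
        simp

lemma K_prod (n : ℕ) : K n * K (n + 1) * (2 * gb) ^ n = (n.factorial : ℝ) * (K 0 * K 1) := by
  induction n with
  | zero => simp
  | succ m ih =>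
      have hgb := gb_pos.ne'
      rw [show m + 1 + 1 = m + 2 from rfl, K_rec m, pow_succ, Nat.factorial_succ]
      push_cast
      calc K (m+1) * (((m:ℝ) + 1) / (2 * gb) * K m) * ((2 * gb) ^ m * (2 * gb))
          = ((m:ℝ) + 1) * (K m * K (m+1) * (2 * gb) ^ m) := by field_simp
      _ = ((m:ℝ) + 1) * ((m.factorial : ℝ) * (K 0 * K 1)) := by rw [ih]
      _ = (((m:ℝ) + 1) * (m.factorial : ℝ)) * (K 0 * K 1) := by ring

/-- The gaussian whose Fourier transform is `exp(-t²/2)/√(2π)`. -/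
noncomputable def fg : ℝ → ℂ :=
  fun x : ℝ => Complex.exp (-(Real.pi : ℂ) * (((2 * Real.pi : ℝ)) : ℂ) * (x : ℂ) ^ 2)

lemma norm_fg (x : ℝ) : ‖fg x‖ = Real.exp (-gb * x ^ 2) := by
  unfold fg
  rw [Complex.norm_exp]
  congr 1
  have h : (-(Real.pi : ℂ) * (((2 * Real.pi : ℝ)) : ℂ) * (x : ℂ) ^ 2)
      = (((-Real.pi * (2 * Real.pi) * x ^ 2 : ℝ)) : ℂ) := by push_cast; ring
  rw [h, Complex.ofReal_re]
  unfold gb; ring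

lemma fg_cont : Continuous fg := by
  unfold fg
  fun_prop

lemma fg_int (k : ℕ) : Integrable (fun x : ℝ => x ^ k • fg x) := by
  refine Integrable.mono' (K_integrand_integrable k) ?_ ?_
  · exact ((continuous_pow k).smul fg_cont).aestronglyMeasurable
  · refine Eventually.of_forall fun x => ?_
    rw [norm_smul, norm_fg]
    simp [abs_pow]

lemma fourier_fg :
    𝓕 fg = fun t : ℝ =>
      (1 / ((Real.sqrt (2 * Real.pi) : ℝ) : ℂ)) * ((Real.exp (-(t ^ 2 / 2)) : ℝ) : ℂ) := by
  have hb : (0 : ℝ) < (((2 * Real.pi : ℝ)) : ℂ).re := by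
    simpa using Real.two_pi_pos
  have h := fourier_gaussian_pi (b := (((2 * Real.pi : ℝ)) : ℂ)) hb
  rw [show (𝓕 fg) = (𝓕 fun x : ℝ => Complex.exp (-(Real.pi:ℂ) * (((2 * Real.pi : ℝ)):ℂ) * (x:ℂ) ^ 2)) from rfl]
  rw [h]
  funext t
  have h1 : (((2 * Real.pi : ℝ)) : ℂ) ^ (1 / 2 : ℂ) = ((Real.sqrt (2 * Real.pi) : ℝ) : ℂ) := by
    rw [show (1 / 2 : ℂ) = (((1 / 2 : ℝ)) : ℂ) by norm_num,
      ← Complex.ofReal_cpow (by positivity)]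
    norm_cast
    rw [Real.sqrt_eq_rpow]
  rw [h1]
  congr 1
  have h2 : (-(Real.pi : ℂ) / (((2 * Real.pi : ℝ)) : ℂ) * (t : ℂ) ^ 2)
      = (((-(t ^ 2 / 2) : ℝ)) : ℂ) := by
    have hπ : (Real.pi : ℂ) ≠ 0 := by
      exact_mod_cast Real.pi_ne_zero
    push_cast
    field_simp
  rw [h2, ← Complex.ofReal_exp]

/-- The real gaussian. -/
noncomputable def G : ℝ → ℝ := fun y => Real.exp (-(y ^ 2 / 2))

lemma hG (m : ℕ) : deriv^[m] G
    = fun x => (-1 : ℝ) ^ m * (Polynomial.aeval x (Polynomial.hermite m)) * G x :=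
  funext fun x => Polynomial.deriv_gaussian_eq_hermite_mul_gaussian m x

lemma G_diff : Differentiable ℝ G := by
  unfold G
  fun_prop

lemma hGdiff (m : ℕ) : Differentiable ℝ (deriv^[m] G) := by
  rw [hG m]
  exact ((Polynomial.differentiable_aeval _).const_mul _).mul G_diff

lemma iteratedDeriv_cast (c : ℂ) (n : ℕ) :
    iteratedDeriv n (fun t : ℝ => c * ((G t : ℝ) : ℂ))
      = fun u => c * ((deriv^[n] G u : ℝ) : ℂ) := by
  induction n with
  | zero => simp [iteratedDeriv_zero]
  | succ m ih =>
      rw [iteratedDeriv_succ, ih]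
      funext u
      have hd : HasDerivAt (deriv^[m] G) (deriv^[m + 1] G u) u := by
        rw [Function.iterate_succ_apply']
        exact (hGdiff m u).hasDerivAt
      exact ((hd.ofReal_comp).const_mul c).deriv

lemma hermite_gauss_le (n : ℕ) (u : ℝ) :
    Real.exp (-(u ^ 2 / 2)) * |Polynomial.aeval u (Polynomial.hermite n)|
      ≤ Real.sqrt (2 * Real.pi) * ((2 * Real.pi) ^ n * K n) := by
  have hsq : (0 : ℝ) < Real.sqrt (2 * Real.pi) := Real.sqrt_pos.mpr Real.two_pi_pos
  have h3 : iteratedDeriv n (𝓕 fg)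
      = 𝓕 (fun x : ℝ => (-2 * (Real.pi:ℝ) * I * (x:ℝ)) ^ n • fg x) :=
    Real.iteratedDeriv_fourier (N := ⊤) (fun k _ => fg_int k) le_top
  have h1 : iteratedDeriv n (𝓕 fg) u
      = (1 / ((Real.sqrt (2 * Real.pi) : ℝ) : ℂ)) * ((deriv^[n] G u : ℝ) : ℂ) := by
    rw [fourier_fg]
    exact congrFun (iteratedDeriv_cast _ n) u
  have h2 : ‖iteratedDeriv n (𝓕 fg) u‖
      = (1 / Real.sqrt (2 * Real.pi)) * (Real.exp (-(u ^ 2 / 2)) * |Polynomial.aeval u (Polynomial.hermite n)|) := by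
    rw [h1, norm_mul]
    rw [show deriv^[n] G u = (-1 : ℝ) ^ n * (Polynomial.aeval u (Polynomial.hermite n)) * G u from congrFun (hG n) u]
    simp only [Complex.norm_real, norm_div, norm_one, Real.norm_eq_abs, abs_mul]
    rw [_root_.abs_pow, _root_.abs_neg, _root_.abs_one, one_pow, one_mul]
    unfold G
    rw [abs_of_pos (Real.exp_pos _), abs_of_pos hsq]
    ring
  have h4 : ‖𝓕 (fun x : ℝ => (-2 * (Real.pi:ℝ) * I * (x:ℝ)) ^ n • fg x) u‖
      ≤ ∫ x : ℝ, ‖(-2 * (Real.pi:ℝ) * I * (x:ℝ)) ^ n • fg x‖ :=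
    VectorFourier.norm_fourierIntegral_le_integral_norm _ _ _ _ _
  have h5 : ∫ x : ℝ, ‖(-2 * (Real.pi:ℝ) * I * (x:ℝ)) ^ n • fg x‖ = (2 * Real.pi) ^ n * K n := by
    have hpt : ∀ x : ℝ, ‖(-2 * (Real.pi:ℝ) * I * (x:ℝ)) ^ n • fg x‖
        = (2 * Real.pi) ^ n * (|x| ^ n * Real.exp (-gb * x ^ 2)) := by
      intro x
      rw [norm_smul, norm_pow, norm_fg]
      have hz : ‖-2 * (Real.pi:ℂ) * I * (x:ℂ)‖ = 2 * Real.pi * |x| := by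
        simp [map_mul, Complex.norm_I, Complex.norm_real,
          abs_of_pos Real.pi_pos]
      rw [hz, mul_pow]
      ring
    calc ∫ x : ℝ, ‖(-2 * (Real.pi:ℝ) * I * (x:ℝ)) ^ n • fg x‖
        = ∫ x : ℝ, (2 * Real.pi) ^ n * (|x| ^ n * Real.exp (-gb * x ^ 2)) := by
          simp only [hpt]
    _ = (2 * Real.pi) ^ n * K n := by rw [MeasureTheory.integral_const_mul, K]
  have h6 : ‖iteratedDeriv n (𝓕 fg) u‖ ≤ (2 * Real.pi) ^ n * K n := by
    rw [h3]
    exact h5 ▸ h4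
  calc Real.exp (-(u ^ 2 / 2)) * |Polynomial.aeval u (Polynomial.hermite n)|
      = Real.sqrt (2 * Real.pi) * ‖iteratedDeriv n (𝓕 fg) u‖ := by
        rw [h2]
        field_simp
  _ ≤ Real.sqrt (2 * Real.pi) * ((2 * Real.pi) ^ n * K n) :=
        mul_le_mul_of_nonneg_left h6 hsq.le


/-- The key quantitative bound. -/
lemma main_bound (m : ℕ) :
    ((2 * Real.pi) ^ (m+1) * K (m+1)) ^ 2 / (((m+2).factorial : ℝ))
      ≤ (2 * Real.pi * (K 0 * K 1)) / ((((m:ℝ)+1)) * Real.sqrt ((m:ℝ)+1)) := by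
  have hπ := Real.pi_pos
  have hm1 : (0:ℝ) < (m:ℝ) + 1 := by positivity
  have hsq : (0:ℝ) < Real.sqrt ((m:ℝ)+1) := Real.sqrt_pos.mpr hm1
  have hfac : (0:ℝ) < (((m+2).factorial : ℕ) : ℝ) := by exact_mod_cast Nat.factorial_pos _
  rw [div_le_div_iff₀ (by positivity) (by positivity)]
  have hratio : Real.sqrt ((m:ℝ)+1) * K (m+1) ≤ 2 * Real.pi * K (m+2) := by
    have h1 := K_ratio m
    have hs : Real.sqrt (((m:ℝ)+1)/(2*gb)) = Real.sqrt ((m:ℝ)+1) / (2*Real.pi) := by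
      rw [show 2*gb = (2*Real.pi)^2 by unfold gb; ring,
        Real.sqrt_div hm1.le, Real.sqrt_sq (by positivity)]
    rw [hs] at h1
    calc Real.sqrt ((m:ℝ)+1) * K (m+1)
        = (Real.sqrt ((m:ℝ)+1) / (2*Real.pi) * K (m+1)) * (2*Real.pi) := by field_simp
    _ ≤ K (m+2) * (2*Real.pi) := mul_le_mul_of_nonneg_right h1 (by positivity)
    _ = 2*Real.pi * K (m+2) := by ring
  have hprod := K_prod (m+1)
  have hA2 : ((2*Real.pi) ^ (m+1)) ^ 2 = (2*gb) ^ (m+1) := by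
    rw [← pow_mul, mul_comm (m+1) 2, pow_mul]
    congr 1
    unfold gb; ring
  have hK01 : (0:ℝ) ≤ K 0 * K 1 := mul_nonneg (K_pos 0).le (K_pos 1).le
  have hfacstep : ((m:ℝ)+1) * (((m+1).factorial : ℕ) : ℝ) ≤ (((m+2).factorial : ℕ) : ℝ) := by
    rw [show (m+2).factorial = (m+2) * (m+1).factorial from rfl]
    push_cast
    exact mul_le_mul_of_nonneg_right (by linarith) (by positivity)
  have hKnn := (K_pos (m+1)).le
  calc ((2 * Real.pi) ^ (m+1) * K (m+1)) ^ 2 * (((m:ℝ)+1) * Real.sqrt ((m:ℝ)+1))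
      = (((m:ℝ)+1) * (((2*Real.pi) ^ (m+1)) ^ 2 * K (m+1))) * (Real.sqrt ((m:ℝ)+1) * K (m+1)) := by
        ring
  _ ≤ (((m:ℝ)+1) * (((2*Real.pi) ^ (m+1)) ^ 2 * K (m+1))) * (2 * Real.pi * K (m+2)) := by
        apply mul_le_mul_of_nonneg_left hratio
        apply mul_nonneg hm1.le
        exact mul_nonneg (by positivity) hKnn
  _ = (2 * Real.pi) * (((m:ℝ)+1) * (K (m+1) * K (m+2) * ((2*Real.pi) ^ (m+1)) ^ 2)) := by ring
  _ = (2 * Real.pi) * (((m:ℝ)+1) * ((((m+1).factorial : ℕ) : ℝ) * (K 0 * K 1))) := by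
        rw [hA2, hprod]
  _ ≤ (2 * Real.pi) * ((((m+2).factorial : ℕ) : ℝ) * (K 0 * K 1)) := by
        apply mul_le_mul_of_nonneg_left _ (by positivity)
        calc ((m:ℝ)+1) * ((((m+1).factorial : ℕ) : ℝ) * (K 0 * K 1))
            = (((m:ℝ)+1) * (((m+1).factorial : ℕ) : ℝ)) * (K 0 * K 1) := by ring
        _ ≤ (((m+2).factorial : ℕ) : ℝ) * (K 0 * K 1) :=
              mul_le_mul_of_nonneg_right hfacstep hK01
  _ = 2 * Real.pi * (K 0 * K 1) * (((m+2).factorial : ℕ) : ℝ) := by ring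

lemma summable_aux (c : ℝ) :
    Summable (fun m : ℕ => c / ((((m:ℝ)+1)) * Real.sqrt ((m:ℝ)+1))) := by
  have hbase : Summable (fun n : ℕ => 1 / (n:ℝ) ^ ((3:ℝ)/2)) :=
    Real.summable_one_div_nat_rpow.mpr (by norm_num)
  have hshift : Summable (fun m : ℕ => 1 / (((m+1 : ℕ)):ℝ) ^ ((3:ℝ)/2)) :=
    (summable_nat_add_iff 1).mpr hbase
  have heq : ∀ m : ℕ, c / ((((m:ℝ)+1)) * Real.sqrt ((m:ℝ)+1))
      = c * (1 / (((m+1 : ℕ)):ℝ) ^ ((3:ℝ)/2)) := by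
    intro m
    have hm1 : (0:ℝ) < (m:ℝ) + 1 := by positivity
    have : (((m+1 : ℕ)):ℝ) ^ ((3:ℝ)/2) = ((m:ℝ)+1) * Real.sqrt ((m:ℝ)+1) := by
      push_cast
      rw [show ((3:ℝ)/2) = 1 + 1/2 by norm_num, Real.rpow_add hm1, Real.rpow_one,
        ← Real.sqrt_eq_rpow]
    rw [this]
    ring
  exact (hshift.mul_left c).congr fun m => (heq m).symm

end SigmaAux

theorem sigma_series_summable
    {d : ℕ} (ρ : (Fin d → ℝ) → ℝ)
    (hρmeas : Measurable ρ)
    (hρle : ∀ t, |ρ t| ≤ 1)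
    (hρint : Integrable ρ)
    (u : ℝ) :
    Summable fun n : ℕ => gaussDensity u ^ 2 * hermiteEval n u ^ 2 / (n + 1).factorial
      * ∫ t : Fin d → ℝ, |ρ t| ^ (n + 1) := by
  have hπ := Real.pi_pos
  have hsq2π : (0:ℝ) < Real.sqrt (2 * Real.pi) := Real.sqrt_pos.mpr Real.two_pi_pos
  set R : ℝ := ∫ t : Fin d → ℝ, |ρ t| with hR
  have hRnn : 0 ≤ R := integral_nonneg fun t => abs_nonneg _
  have hle1 : ∀ n : ℕ, ∀ t, |ρ t| ^ (n+1) ≤ |ρ t| := by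
    intro n t
    calc |ρ t| ^ (n+1) ≤ |ρ t| ^ 1 :=
          pow_le_pow_of_le_one (abs_nonneg _) (hρle t) (by omega)
    _ = |ρ t| := pow_one _
  have hint : ∀ n : ℕ, Integrable (fun t : Fin d → ℝ => |ρ t| ^ (n+1)) := by
    intro n
    refine hρint.abs.mono' ?_ ?_
    · exact ((hρmeas.abs.pow_const (n+1))).aestronglyMeasurable
    · refine Filter.Eventually.of_forall fun t => ?_
      rw [Real.norm_eq_abs, _root_.abs_of_nonneg (by positivity)]
      exact hle1 n t
  have hIle : ∀ n : ℕ, (∫ t : Fin d → ℝ, |ρ t| ^ (n+1)) ≤ R :=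
    fun n => integral_mono (hint n) hρint.abs (hle1 n)
  have hInn : ∀ n : ℕ, 0 ≤ ∫ t : Fin d → ℝ, |ρ t| ^ (n+1) :=
    fun n => integral_nonneg fun t => by positivity
  -- the pointwise hermite bound
  have hHe : ∀ n : ℕ, gaussDensity u * |hermiteEval n u| ≤ (2*Real.pi) ^ n * SigmaAux.K n := by
    intro n
    have h := SigmaAux.hermite_gauss_le n u
    calc gaussDensity u * |hermiteEval n u|
        = (Real.exp (-(u ^ 2 / 2)) * |Polynomial.aeval u (Polynomial.hermite n)|)
            / Real.sqrt (2 * Real.pi) := by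
          unfold gaussDensity hermiteEval
          rw [neg_div]
          ring
    _ ≤ (Real.sqrt (2 * Real.pi) * ((2*Real.pi) ^ n * SigmaAux.K n)) / Real.sqrt (2 * Real.pi) := by
          gcongr
    _ = (2*Real.pi) ^ n * SigmaAux.K n := by field_simp
  have hterm_nonneg : ∀ n : ℕ,
      0 ≤ gaussDensity u ^ 2 * hermiteEval n u ^ 2 / (n + 1).factorial
        * ∫ t : Fin d → ℝ, |ρ t| ^ (n + 1) := by
    intro n
    exact mul_nonneg (by positivity) (hInn n)
  set C : ℝ := 2 * Real.pi * (SigmaAux.K 0 * SigmaAux.K 1) * R with hC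
  rw [← summable_nat_add_iff 1]
  apply Summable.of_nonneg_of_le (fun m => hterm_nonneg (m+1)) ?_ (SigmaAux.summable_aux C)
  intro m
  have hb := SigmaAux.main_bound m
  have hBnn : 0 ≤ (2*Real.pi) ^ (m+1) * SigmaAux.K (m+1) :=
    mul_nonneg (by positivity) (SigmaAux.K_pos (m+1)).le
  have hfacpos : (0:ℝ) < (((m+1+1).factorial : ℕ) : ℝ) := by
    exact_mod_cast Nat.factorial_pos _
  have hsqr : gaussDensity u ^ 2 * hermiteEval (m+1) u ^ 2
      ≤ ((2*Real.pi) ^ (m+1) * SigmaAux.K (m+1)) ^ 2 := by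
    have h0 : gaussDensity u ^ 2 * hermiteEval (m+1) u ^ 2
        = (gaussDensity u * |hermiteEval (m+1) u|) ^ 2 := by
      rw [mul_pow, _root_.sq_abs]
    rw [h0]
    have hnn : 0 ≤ gaussDensity u * |hermiteEval (m+1) u| := by
      apply mul_nonneg _ (abs_nonneg _)
      unfold gaussDensity
      positivity
    exact pow_le_pow_left₀ hnn (hHe (m+1)) 2
  calc gaussDensity u ^ 2 * hermiteEval (m+1) u ^ 2 / ((m+1) + 1).factorial
        * ∫ t : Fin d → ℝ, |ρ t| ^ ((m+1) + 1)
      ≤ ((2*Real.pi) ^ (m+1) * SigmaAux.K (m+1)) ^ 2 / (((m+2).factorial : ℕ) : ℝ) * R := by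
        apply mul_le_mul _ (hIle (m+1)) (hInn (m+1)) _
        · gcongr
        · positivity
  _ ≤ (2 * Real.pi * (SigmaAux.K 0 * SigmaAux.K 1))
        / ((((m:ℝ)+1)) * Real.sqrt ((m:ℝ)+1)) * R :=
        mul_le_mul_of_nonneg_right hb hRnn
  _ = C / ((((m:ℝ)+1)) * Real.sqrt ((m:ℝ)+1)) := by
        rw [hC]
        ring
end

section
/- There exists a constant K > 0 such that for all real u and all natural numbers n, φ(u) |H_n(u)| / √(n!) < K, where φ(u) = (2π)^{−1/2} e^{−u²/2}. -/
open MeasureTheory Filter Real Set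
open scoped Topology

lemma integrableOn_pow_gauss {b : ℝ} (hb : 0 < b) (n : ℕ) :
    IntegrableOn (fun x : ℝ => x ^ n * Real.exp (-b * x ^ 2)) (Ioi 0) := by
  have h := integrableOn_rpow_mul_exp_neg_mul_sq hb (s := (n : ℝ)) (lt_of_lt_of_le neg_one_lt_zero (Nat.cast_nonneg n))
  simpa [Real.rpow_natCast] using h

lemma integrable_pow_gauss {b : ℝ} (hb : 0 < b) (n : ℕ) :
    Integrable (fun x : ℝ => x ^ n * Real.exp (-b * x ^ 2)) := by
  have h := integrable_rpow_mul_exp_neg_mul_sq hb (s := (n : ℝ)) (lt_of_lt_of_le neg_one_lt_zero (Nat.cast_nonneg n))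
  simpa [Real.rpow_natCast] using h

lemma tendsto_pow_gauss {b : ℝ} (hb : 0 < b) (n : ℕ) :
    Tendsto (fun x : ℝ => x ^ n * Real.exp (-b * x ^ 2)) atTop (𝓝 0) := by
  have hlin : Tendsto (fun x : ℝ => (-(1/2) : ℝ) * x) atTop atBot :=
    Tendsto.const_mul_atTop_of_neg (by norm_num) tendsto_id
  have hexp : Tendsto (fun x : ℝ => Real.exp (-(1/2 : ℝ) * x)) atTop (𝓝 0) := by
    exact Real.tendsto_exp_atBot.comp hlin
  have h := (rpow_mul_exp_neg_mul_sq_isLittleO_exp_neg hb (n : ℝ)).tendsto_zero_of_tendsto hexp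
  simpa [Real.rpow_natCast] using h

lemma gauss_mom_rec {b : ℝ} (hb : 0 < b) (n : ℕ) :
    ∫ x in Ioi (0:ℝ), x ^ (n+2) * Real.exp (-b * x ^ 2)
      = ((n+1 : ℝ)/(2*b)) * ∫ x in Ioi (0:ℝ), x ^ n * Real.exp (-b * x ^ 2) := by
  have hb' : b ≠ 0 := ne_of_gt hb
  set F : ℝ → ℝ := fun x => -(1/(2*b)) * (x ^ (n+1) * Real.exp (-b * x ^ 2)) with hF
  set φ : ℝ → ℝ := fun x => x ^ (n+2) * Real.exp (-b * x ^ 2)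
      - ((n+1 : ℝ)/(2*b)) * (x ^ n * Real.exp (-b * x ^ 2)) with hφ
  have hderiv : ∀ x ∈ Ici (0:ℝ), HasDerivAt F (φ x) x := by
    intro x _
    have h1 : HasDerivAt (fun x : ℝ => x ^ (n+1)) ((n+1 : ℝ) * x ^ n) x := by
      simpa using hasDerivAt_pow (n+1) x
    have h2 : HasDerivAt (fun x : ℝ => Real.exp (-b * x ^ 2))
        (Real.exp (-b * x ^ 2) * (-b * (2 * x))) x := by
      have h3 : HasDerivAt (fun x : ℝ => -b * x ^ 2) (-b * (2 * x)) x := by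
        simpa using ((hasDerivAt_pow 2 x).const_mul (-b))
      exact h3.exp
    have := ((h1.mul h2).const_mul (-(1/(2*b))))
    refine this.congr_deriv ?_
    simp only [hφ]
    field_simp [hφ]
    ring
  have htop : Tendsto F atTop (𝓝 0) := by
    have h := (tendsto_pow_gauss hb (n+1)).const_mul (-(1/(2*b)))
    simpa only [mul_zero] using h
  have hint : IntegrableOn φ (Ioi 0) :=
    (integrableOn_pow_gauss hb (n+2)).sub ((integrableOn_pow_gauss hb n).const_mul _)
  have key := integral_Ioi_of_hasDerivAt_of_tendsto' (fun x hx => hderiv x hx) hint htop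
  have hF0 : F 0 = 0 := by simp [hF]
  rw [hF0, sub_zero] at key
  have hsub : ∫ x in Ioi (0:ℝ), φ x
      = (∫ x in Ioi (0:ℝ), x ^ (n+2) * Real.exp (-b * x ^ 2))
        - ((n+1 : ℝ)/(2*b)) * ∫ x in Ioi (0:ℝ), x ^ n * Real.exp (-b * x ^ 2) := by
    rw [integral_sub (integrableOn_pow_gauss hb (n+2))
      ((integrableOn_pow_gauss hb n).const_mul _), integral_const_mul]
  rw [key] at hsub
  linarith [hsub]

lemma gauss_mom_one {b : ℝ} (hb : 0 < b) :
    ∫ x in Ioi (0:ℝ), x ^ 1 * Real.exp (-b * x ^ 2) = 1/(2*b) := by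
  have hb' : b ≠ 0 := ne_of_gt hb
  set F : ℝ → ℝ := fun x => -(1/(2*b)) * Real.exp (-b * x ^ 2) with hF
  have hderiv : ∀ x ∈ Ici (0:ℝ), HasDerivAt F (x ^ 1 * Real.exp (-b * x ^ 2)) x := by
    intro x _
    have h2 : HasDerivAt (fun x : ℝ => Real.exp (-b * x ^ 2))
        (Real.exp (-b * x ^ 2) * (-b * (2 * x))) x := by
      have h3 : HasDerivAt (fun x : ℝ => -b * x ^ 2) (-b * (2 * x)) x := by
        simpa using ((hasDerivAt_pow 2 x).const_mul (-b))
      exact h3.exp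
    have := h2.const_mul (-(1/(2*b)))
    refine this.congr_deriv ?_
    field_simp
  have htop : Tendsto F atTop (𝓝 0) := by
    have h0 : Tendsto (fun x : ℝ => Real.exp (-b * x ^ 2)) atTop (𝓝 0) := by
      have := tendsto_pow_gauss hb 0
      simpa using this
    have h1 := h0.const_mul (-(1/(2*b)))
    simpa only [mul_zero] using h1
  have key := integral_Ioi_of_hasDerivAt_of_tendsto' (fun x hx => hderiv x hx)
    (integrableOn_pow_gauss hb 1) htop
  rw [key]
  simp [hF]

noncomputable def Pgauss (n : ℕ) : ℝ := ∫ x : ℝ, |x| ^ n * Real.exp (-(2*π^2) * x ^ 2)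

lemma twoPiSq_pos : (0:ℝ) < 2*π^2 := by positivity

lemma Pgauss_eq (n : ℕ) :
    Pgauss n = 2 * ∫ x in Ioi (0:ℝ), x ^ n * Real.exp (-(2*π^2) * x ^ 2) := by
  have h : ∀ x : ℝ, |x| ^ n * Real.exp (-(2*π^2) * x ^ 2)
      = |x| ^ n * Real.exp (-(2*π^2) * |x| ^ 2) := by
    intro x; rw [sq_abs]
  rw [Pgauss]
  simp_rw [h]
  exact integral_comp_abs (f := fun x => x ^ n * Real.exp (-(2*π^2) * x ^ 2))

lemma Pgauss_nonneg (n : ℕ) : 0 ≤ Pgauss n := by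
  apply integral_nonneg
  intro x
  positivity

lemma Pgauss_rec (n : ℕ) : Pgauss (n+2) = ((n+1 : ℝ)/(4*π^2)) * Pgauss n := by
  rw [Pgauss_eq, Pgauss_eq, gauss_mom_rec twoPiSq_pos n]
  have : (2 * (2*π^2)) = 4*π^2 := by ring
  rw [this]
  ring

lemma Pgauss_zero : Pgauss 0 = Real.sqrt (π/(2*π^2)) := by
  have := integral_gaussian (2*π^2)
  rw [Pgauss]
  simpa using this

lemma Pgauss_one : Pgauss 1 = 1/(2*π^2) := by
  rw [Pgauss_eq, gauss_mom_one twoPiSq_pos]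
  field_simp

lemma key_bound (n : ℕ) : (2*π)^n * Pgauss n ≤ Real.sqrt (n.factorial) := by
  induction n using Nat.twoStepInduction with
  | zero =>
    rw [Pgauss_zero]
    have h1 : π/(2*π^2) ≤ 1 := by
      rw [div_le_one (by positivity)]
      nlinarith [pi_gt_three]
    have := Real.sqrt_le_sqrt h1
    simpa using this
  | one =>
    rw [Pgauss_one]
    have hπ : (1:ℝ) ≤ π := by nlinarith [pi_gt_three]
    have h2 : (2*π)^1 * (1/(2*π^2)) = 1/π := by
      field_simp
    rw [h2]
    have : (1:ℝ)/π ≤ 1 := by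
      rw [div_le_one (by positivity)]
      exact hπ
    simpa using this
  | more n ih _ =>
    rw [Pgauss_rec]
    have hrw : (2*π)^(n+2) * (((n:ℝ)+1)/(4*π^2) * Pgauss n)
        = ((n:ℝ)+1) * ((2*π)^n * Pgauss n) := by
      have hπ : π ≠ 0 := pi_ne_zero
      field_simp
      ring
    rw [hrw]
    have step1 : ((n:ℝ)+1) * ((2*π)^n * Pgauss n) ≤ ((n:ℝ)+1) * Real.sqrt n.factorial :=
      mul_le_mul_of_nonneg_left ih (by positivity)
    refine step1.trans ?_
    have hs : ((n:ℝ)+1) * Real.sqrt n.factorial = Real.sqrt (((n:ℝ)+1)^2 * n.factorial) := by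
      rw [Real.sqrt_mul (by positivity), Real.sqrt_sq (by positivity)]
    rw [hs]
    apply Real.sqrt_le_sqrt
    have : ((n+2).factorial : ℝ) = ((n:ℝ)+2) * (((n:ℝ)+1) * (n.factorial : ℝ)) := by
      push_cast [Nat.factorial_succ]
      ring
    rw [this]
    have hf : (0:ℝ) ≤ (n.factorial : ℝ) := by positivity
    nlinarith [hf]

open FourierTransform Complex in
lemma iteratedDeriv_ofReal_comp (f : ℝ → ℝ) (hf : ContDiff ℝ ⊤ f) (n : ℕ) (x : ℝ) :
    iteratedDeriv n (fun y : ℝ => ((f y : ℝ) : ℂ)) x = ((iteratedDeriv n f x : ℝ) : ℂ) := by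
  induction n generalizing x with
  | zero => simp
  | succ n ih =>
    rw [iteratedDeriv_succ, iteratedDeriv_succ]
    have hfun : iteratedDeriv n (fun y : ℝ => ((f y : ℝ) : ℂ))
        = fun y => ((iteratedDeriv n f y : ℝ) : ℂ) := funext ih
    rw [hfun]
    have hd : DifferentiableAt ℝ (iteratedDeriv n f) x :=
      (hf.differentiable_iteratedDeriv n (by simp)).differentiableAt
    exact (hd.hasDerivAt.ofReal_comp).deriv

open FourierTransform Complex in
lemma gauss_iteratedDeriv_bound (n : ℕ) (x : ℝ) :
    |deriv^[n] (fun y : ℝ => Real.exp (-(y^2/2))) x|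
      ≤ Real.sqrt (2*π) * Real.sqrt n.factorial := by
  have hb : (0:ℝ) < 2*π := by positivity
  set c : ℂ := ((2*π : ℝ) : ℂ) ^ (1/2 : ℂ) with hc
  have hbne : ((2*π : ℝ) : ℂ) ≠ 0 := Complex.ofReal_ne_zero.mpr (ne_of_gt hb)
  have hcne : c ≠ 0 := by
    rw [hc]
    intro h
    rcases Complex.cpow_eq_zero_iff _ _ |>.mp h with ⟨h1, _⟩
    exact hbne h1
  set w : ℝ → ℂ := fun ξ => c * ((Real.exp (-(2*π^2) * ξ^2) : ℝ) : ℂ) with hw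
  -- integrability of x^k • w
  have hint : ∀ k : ℕ, Integrable (fun ξ : ℝ => ξ^k • w ξ) := by
    intro k
    have h1 : Integrable (fun ξ : ℝ => ξ^k * Real.exp (-(2*π^2) * ξ^2)) :=
      integrable_pow_gauss twoPiSq_pos k
    have h2 := (h1.ofReal (𝕜 := ℂ)).const_mul c
    apply h2.congr
    filter_upwards with ξ
    simp only [hw]
    rw [Complex.real_smul, RCLike.ofReal_mul]
    ring_nf
    rfl
  -- Fourier transform of w is the standard gaussian
  have hFw : 𝓕 w = fun t : ℝ => ((Real.exp (-(t^2/2)) : ℝ) : ℂ) := by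
    have h0 : w = c • (fun ξ : ℝ => Complex.exp (-(π:ℂ) * ((2*π : ℝ) : ℂ) * (ξ:ℂ)^2)) := by
      funext ξ
      simp only [Pi.smul_apply, smul_eq_mul, hw]
      congr 1
      rw [show -(π:ℂ) * ((2*π : ℝ) : ℂ) * (ξ:ℂ)^2 = ((-(2*π^2) * ξ^2 : ℝ) : ℂ) by
        push_cast; ring]
      rw [← Complex.ofReal_exp]
    have hre : (0:ℝ) < (((2*π : ℝ) : ℂ)).re := by simpa using hb
    have hgauss := fourier_gaussian_pi (b := ((2*π : ℝ) : ℂ)) hre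
    rw [h0]
    show 𝓕 _ = _
    rw [show 𝓕 (c • fun ξ : ℝ => Complex.exp (-(π:ℂ) * ((2*π : ℝ) : ℂ) * (ξ:ℂ)^2))
        = c • 𝓕 (fun ξ : ℝ => Complex.exp (-(π:ℂ) * ((2*π : ℝ) : ℂ) * (ξ:ℂ)^2))
      from VectorFourier.fourierIntegral_const_smul _ _ _ _ _]
    rw [hgauss]
    funext t
    simp only [Pi.smul_apply, smul_eq_mul]
    have hπc : (π:ℂ) ≠ 0 := Complex.ofReal_ne_zero.mpr pi_ne_zero
    have harg : -(π:ℂ) / ((2*π : ℝ) : ℂ) * (t:ℂ)^2 = ((-(t^2/2) : ℝ) : ℂ) := by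
      push_cast
      field_simp
    rw [harg, Complex.ofReal_exp]
    rw [← mul_assoc, mul_one_div, div_self hcne, one_mul]
  -- differentiate under the Fourier integral
  have hID := Real.iteratedDeriv_fourier (f := w) (N := (n : ℕ∞))
    (fun k _ => hint k) (le_refl (n : ℕ∞))
  -- the gaussian is smooth
  have hg : ContDiff ℝ ⊤ (fun y : ℝ => Real.exp (-(y^2/2))) := by
    apply Real.contDiff_exp.comp
    exact ((contDiff_id.pow 2).div_const 2).neg
  have hcoe : iteratedDeriv n (fun y : ℝ => ((Real.exp (-(y^2/2)) : ℝ) : ℂ)) x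
      = ((iteratedDeriv n (fun y : ℝ => Real.exp (-(y^2/2))) x : ℝ) : ℂ) :=
    iteratedDeriv_ofReal_comp _ hg n x
  have hstart : |deriv^[n] (fun y : ℝ => Real.exp (-(y^2/2))) x|
      = ‖iteratedDeriv n (𝓕 w) x‖ := by
    rw [hFw, hcoe, ← iteratedDeriv_eq_iterate]
    simp [Complex.norm_real]
  rw [hstart, hID]
  apply le_trans (VectorFourier.norm_fourierIntegral_le_integral_norm 𝐞 volume (innerₗ ℝ) _ x)
  have hnorm : ∀ ξ : ℝ, ‖(-2 * (π:ℂ) * Complex.I * (ξ:ℂ))^n • w ξ‖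
      = ((2*π)^n * Real.sqrt (2*π)) * (|ξ|^n * Real.exp (-(2*π^2) * ξ^2)) := by
    intro ξ
    have h1 : ‖(-2 * (π:ℂ) * Complex.I * (ξ:ℂ))‖ = 2*π*|ξ| := by
      simp [map_mul, Complex.norm_real, Complex.norm_I,
        abs_of_pos Real.pi_pos]
    have h2 : ‖c‖ = Real.sqrt (2*π) := by
      rw [hc, Complex.norm_cpow_eq_rpow_re_of_pos hb]
      simp [Real.sqrt_eq_rpow]
    rw [norm_smul, norm_pow, h1, hw, norm_mul, h2]
    simp only [Complex.norm_real, Real.norm_eq_abs,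
      abs_of_pos (Real.exp_pos _), mul_pow]
    ring
  simp only [hnorm]
  rw [integral_const_mul]
  have hkb := key_bound n
  calc ((2*π)^n * Real.sqrt (2*π)) * ∫ ξ : ℝ, |ξ|^n * Real.exp (-(2*π^2) * ξ^2)
      = Real.sqrt (2*π) * ((2*π)^n * Pgauss n) := by rw [Pgauss]; ring
    _ ≤ Real.sqrt (2*π) * Real.sqrt n.factorial :=
        mul_le_mul_of_nonneg_left hkb (Real.sqrt_nonneg _)

theorem hermite_uniform_bound :
    ∃ K : ℝ, 0 < K ∧ ∀ (u : ℝ) (n : ℕ),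
      gaussDensity u * |hermiteEval n u| / Real.sqrt (n.factorial) < K := by
  refine ⟨2, by norm_num, fun u n => ?_⟩
  have hπ : (0:ℝ) < 2*π := by positivity
  have hfac1 : (1:ℝ) ≤ (n.factorial : ℝ) := by exact_mod_cast n.factorial_pos
  have hsf : (1:ℝ) ≤ Real.sqrt (n.factorial) := by
    rw [show (1:ℝ) = Real.sqrt 1 from (Real.sqrt_one).symm]
    exact Real.sqrt_le_sqrt hfac1
  have hsπ : (0:ℝ) < Real.sqrt (2*π) := Real.sqrt_pos.mpr hπ
  have hHG := Polynomial.deriv_gaussian_eq_hermite_mul_gaussian n u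
  have hnum : Real.exp (-(u^2/2)) * |hermiteEval n u|
      ≤ Real.sqrt (2*π) * Real.sqrt n.factorial := by
    have hB := gauss_iteratedDeriv_bound n u
    rw [hHG] at hB
    calc Real.exp (-(u^2/2)) * |hermiteEval n u|
        = |(-1:ℝ)^n * Polynomial.aeval u (Polynomial.hermite n) * Real.exp (-(u^2/2))| := by
          rw [abs_mul, abs_mul, abs_pow, abs_neg, abs_one, one_pow, one_mul,
            abs_of_pos (Real.exp_pos _), hermiteEval]
          ring
      _ ≤ Real.sqrt (2*π) * Real.sqrt n.factorial := hB
  have hexpand : gaussDensity u * |hermiteEval n u| / Real.sqrt (n.factorial)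
      = (Real.exp (-(u^2/2)) * |hermiteEval n u|)
        / (Real.sqrt (2*π) * Real.sqrt n.factorial) := by
    rw [gaussDensity, show -u^2/2 = -(u^2/2) by ring]
    field_simp
  rw [hexpand]
  have hden : (0:ℝ) < Real.sqrt (2*π) * Real.sqrt n.factorial := by positivity
  have h1 : (Real.exp (-(u^2/2)) * |hermiteEval n u|)
      / (Real.sqrt (2*π) * Real.sqrt n.factorial) ≤ 1 :=
    (div_le_one hden).mpr hnum
  linarith
end

section
/- For every integer p ≥ 2, Σ_{r=0}^{p−2} (r!)² C(p−1,r)⁴ (2p−2−2r)! ≤ 9^{p−1} ((p−1)!)², where C(p−1,r) denotes the binomial coefficient. Equivalently, Σ_{r=0}^{p−2} C(p−1,r)² C(2p−2−2r, p−1−r) ≤ 9^{p−1}. -/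
open Finset

lemma my_central_le (k : ℕ) : (2 * k).choose k ≤ 4 ^ k := by
  have h : (2 * k).choose k ≤ ∑ i ∈ range (2 * k + 1), (2 * k).choose i :=
    Finset.single_le_sum (f := fun i => (2 * k).choose i) (fun i _ => Nat.zero_le _)
      (by simp; omega)
  rw [Nat.sum_range_choose] at h
  calc (2 * k).choose k ≤ 2 ^ (2 * k) := h
    _ = 4 ^ k := by rw [pow_mul]; norm_num

lemma term_id (n r : ℕ) (hr : r ≤ n) :
    r.factorial ^ 2 * (n.choose r) ^ 4 * (2 * (n - r)).factorial
      = n.factorial ^ 2 * ((n.choose r) ^ 2 * ((2 * (n - r)).choose (n - r))) := by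
  have h1 : n.choose r * r.factorial * (n - r).factorial = n.factorial :=
    Nat.choose_mul_factorial_mul_factorial hr
  have h2 : (2 * (n - r)).choose (n - r) * (n - r).factorial
      * (2 * (n - r) - (n - r)).factorial = (2 * (n - r)).factorial :=
    Nat.choose_mul_factorial_mul_factorial (by omega)
  have h3 : 2 * (n - r) - (n - r) = n - r := by omega
  rw [h3] at h2
  rw [← h1, ← h2]; ring

lemma sum_bound (n : ℕ) :
    (∑ r ∈ Finset.range n, ((n.choose r : ℝ)) ^ 2 * ((2 * (n - r)).choose (n - r) : ℝ))
      ≤ 9 ^ n := by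
  have key : ∀ r ∈ Finset.range n,
      ((n.choose r : ℝ)) ^ 2 * ((2 * (n - r)).choose (n - r) : ℝ)
        ≤ ((n.choose r : ℝ) * 2 ^ (n - r)) ^ 2 := by
    intro r _
    have h := my_central_le (n - r)
    have h' : ((2 * (n - r)).choose (n - r) : ℝ) ≤ 4 ^ (n - r) := by
      exact_mod_cast h
    have hc : (0 : ℝ) ≤ (n.choose r : ℝ) ^ 2 := by positivity
    calc ((n.choose r : ℝ)) ^ 2 * ((2 * (n - r)).choose (n - r) : ℝ)
        ≤ (n.choose r : ℝ) ^ 2 * 4 ^ (n - r) := by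
          exact mul_le_mul_of_nonneg_left h' hc
      _ = ((n.choose r : ℝ) * 2 ^ (n - r)) ^ 2 := by
          rw [mul_pow, ← pow_mul, mul_comm (n - r) 2, pow_mul]; norm_num
  have h1 := Finset.sum_le_sum key
  set a : ℕ → ℝ := fun r => (n.choose r : ℝ) * 2 ^ (n - r) with ha
  have hanneg : ∀ r ∈ Finset.range (n + 1), 0 ≤ a r := fun r _ => by positivity
  have h2 : ∀ r ∈ Finset.range n, a r ^ 2 ≤ a r * ∑ s ∈ Finset.range (n + 1), a s := by
    intro r hr
    have hrs : a r ≤ ∑ s ∈ Finset.range (n + 1), a s :=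
      Finset.single_le_sum hanneg (by simp at hr ⊢; omega)
    have := mul_le_mul_of_nonneg_left hrs (by positivity : (0:ℝ) ≤ a r)
    calc a r ^ 2 = a r * a r := sq (a r) ▸ by ring
      _ ≤ a r * ∑ s ∈ Finset.range (n + 1), a s := this
  have hsum3 : ∑ s ∈ Finset.range (n + 1), a s = 3 ^ n := by
    have := add_pow (1 : ℝ) 2 n
    simp only [one_pow, one_mul] at this
    rw [show (3:ℝ) = 1 + 2 by norm_num, this, ha]
    apply Finset.sum_congr rfl
    intro r _; push_cast; ring
  have h3 : ∑ r ∈ Finset.range n, a r ^ 2 ≤ (3 ^ n) * (3 ^ n) := by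
    calc ∑ r ∈ Finset.range n, a r ^ 2
        ≤ ∑ r ∈ Finset.range n, a r * ∑ s ∈ Finset.range (n + 1), a s :=
          Finset.sum_le_sum h2
      _ = (∑ r ∈ Finset.range n, a r) * ∑ s ∈ Finset.range (n + 1), a s := by
          rw [Finset.sum_mul]
      _ ≤ (∑ r ∈ Finset.range (n + 1), a r) * ∑ s ∈ Finset.range (n + 1), a s := by
          apply mul_le_mul_of_nonneg_right
          · exact Finset.sum_le_sum_of_subset_of_nonneg
              (Finset.range_subset_range.2 (Nat.le_succ n)) (fun i hi _ => by positivity)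
          · exact Finset.sum_nonneg hanneg
      _ = (3 ^ n) * (3 ^ n) := by rw [hsum3]
  calc (∑ r ∈ Finset.range n, ((n.choose r : ℝ)) ^ 2 * ((2 * (n - r)).choose (n - r) : ℝ))
      ≤ ∑ r ∈ Finset.range n, a r ^ 2 := h1
    _ ≤ (3 ^ n) * (3 ^ n) := h3
    _ = 9 ^ n := by rw [← mul_pow]; norm_num

theorem combinatorial_sum_bound (p : ℕ) (hp : 2 ≤ p) :
    (∑ r ∈ Finset.range (p - 1), ((r.factorial : ℝ)) ^ 2 * ((p - 1).choose r : ℝ) ^ 4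
        * ((2 * p - 2 - 2 * r).factorial : ℝ))
      ≤ 9 ^ (p - 1) * ((p - 1).factorial : ℝ) ^ 2 ∧
    (∑ r ∈ Finset.range (p - 1),
        ((p - 1).choose r : ℝ) ^ 2 * ((2 * p - 2 - 2 * r).choose (p - 1 - r) : ℝ))
      ≤ 9 ^ (p - 1) := by
  set n := p - 1 with hn
  have harg : ∀ r ∈ Finset.range n, 2 * p - 2 - 2 * r = 2 * (n - r) := by
    intro r hr; simp only [Finset.mem_range] at hr; omega
  have hsub : ∀ r ∈ Finset.range n, p - 1 - r = n - r := fun r _ => rfl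
  have hS2 : (∑ r ∈ Finset.range (p - 1),
        ((p - 1).choose r : ℝ) ^ 2 * ((2 * p - 2 - 2 * r).choose (p - 1 - r) : ℝ))
      = ∑ r ∈ Finset.range n, ((n.choose r : ℝ)) ^ 2 * ((2 * (n - r)).choose (n - r) : ℝ) := by
    apply Finset.sum_congr rfl
    intro r hr; rw [harg r hr]
  have hb := sum_bound n
  constructor
  · have hS1 : (∑ r ∈ Finset.range (p - 1), ((r.factorial : ℝ)) ^ 2 * ((p - 1).choose r : ℝ) ^ 4
        * ((2 * p - 2 - 2 * r).factorial : ℝ))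
      = (n.factorial : ℝ) ^ 2 * ∑ r ∈ Finset.range n,
          ((n.choose r : ℝ)) ^ 2 * ((2 * (n - r)).choose (n - r) : ℝ) := by
      rw [Finset.mul_sum]
      apply Finset.sum_congr rfl
      intro r hr
      rw [harg r hr]
      have hrn : r ≤ n := by simp only [Finset.mem_range] at hr; omega
      have := term_id n r hrn
      have : ((r.factorial ^ 2 * (n.choose r) ^ 4 * (2 * (n - r)).factorial : ℕ) : ℝ)
          = ((n.factorial ^ 2 * ((n.choose r) ^ 2 * ((2 * (n - r)).choose (n - r))) : ℕ) : ℝ) := by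
        exact_mod_cast congrArg (fun x : ℕ => (x : ℝ)) this
      push_cast at this
      linarith [this]
    rw [hS1, mul_comm]
    exact mul_le_mul_of_nonneg_right hb (by positivity)
  · rw [hS2]; exact hb
end
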